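/- arXiv:1411.4699 — 2 statements merged into one kernel-verified Lean document; each statement's English description precedes it below -/
import Mathlib

section
/- Let U be an integral, Noetherian, normal scheme (i.e., an irreducible and reduced Noetherian scheme all of whose local rings are integrally closed domains). Let U₀ ⊆ U be an open subscheme such that every point of U ∖ U₀ has local ring of Krull dimension at least 2 (the complement of U₀ has codimension ≥ 2 in U). Let g : J → U be an affine morphism of schemes with J integral, and suppose there is an open immersion ι : U₀ → J with topologically dense image such that the composite g ∘ ι equals the open immersion U₀ ↪ U. Then g is an isomorphism of schemes. -/
open AlgebraicGeometry CategoryTheory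

section AlgebraPreliminaries

open IsLocalRing

/-- A Noetherian local domain whose maximal ideal is principal has Krull dimension
at most one. -/
lemma ringKrullDim_le_one_of_principal_maximalIdeal {R : Type*} [CommRing R] [IsDomain R]
    [IsNoetherianRing R] [IsLocalRing R] {u : R}
    (hu : maximalIdeal R = Ideal.span {u}) : ringKrullDim R ≤ 1 := by
  have hprime : ∀ q : Ideal R, q.IsPrime → q = ⊥ ∨ q = maximalIdeal R := by
    intro q hq
    by_cases hqm : q = maximalIdeal R
    · exact Or.inr hqm
    left
    have huq : u ∉ q := by
      intro h
      exact hqm (le_antisymm (le_maximalIdeal hq.ne_top)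
        (hu ▸ Ideal.span_le.mpr (Set.singleton_subset_iff.mpr h)))
    have key : ∀ v ∈ q, ∀ n : ℕ, ∃ w ∈ q, v = u ^ n * w := by
      intro v hv n
      induction n with
      | zero => exact ⟨v, hv, by simp⟩
      | succ n ih =>
        obtain ⟨w, hw, rfl⟩ := ih
        have hwm : w ∈ maximalIdeal R := le_maximalIdeal hq.ne_top hw
        rw [hu, Ideal.mem_span_singleton] at hwm
        obtain ⟨w', rfl⟩ := hwm
        have hw'q : w' ∈ q := by
          rcases hq.mem_or_mem hw with h | h
          · exact absurd h huq
          · exact h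
        exact ⟨w', hw'q, by ring⟩
    ext v
    simp only [Submodule.mem_bot]
    constructor
    · intro hv
      have hvmem : v ∈ ⨅ n : ℕ, (maximalIdeal R) ^ n := by
        rw [Submodule.mem_iInf]
        intro n
        obtain ⟨w, _, rfl⟩ := key v hv n
        rw [hu, Ideal.span_singleton_pow]
        exact Ideal.mem_span_singleton.mpr ⟨w, rfl⟩
      rwa [Ideal.iInf_pow_eq_bot_of_isLocalRing _
        (maximalIdeal.isMaximal R).ne_top, Submodule.mem_bot] at hvmem
    · rintro rfl; exact q.zero_mem
  rw [ringKrullDim, Order.krullDim]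
  refine iSup_le fun p => ?_
  have hlen : p.length ≤ 1 := by
    by_contra hlen
    push_neg at hlen
    have h0 : (0 : Fin (p.length + 1)) < ⟨1, by omega⟩ := by
      simp [Fin.lt_def]
    have h1 : (⟨1, by omega⟩ : Fin (p.length + 1)) < ⟨2, by omega⟩ := by
      simp [Fin.lt_def]
    have h01 : (p.toFun 0).asIdeal < (p.toFun ⟨1, by omega⟩).asIdeal := p.strictMono h0
    have h12 : (p.toFun ⟨1, by omega⟩).asIdeal < (p.toFun ⟨2, by omega⟩).asIdeal :=
      p.strictMono h1
    rcases hprime _ (p.toFun ⟨1, by omega⟩).isPrime with h | h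
    · rw [h] at h01
      exact not_lt_bot h01
    · rw [h] at h12
      exact h12.not_ge (le_maximalIdeal (p.toFun ⟨2, by omega⟩).isPrime.ne_top)
  exact_mod_cast Nat.cast_le.mpr hlen

/-- Key case of the Krull–Kaplansky argument: if `R` is a Noetherian local integrally
closed domain and the maximal ideal is a conductor-type ideal `(a : e)` with `e ∉ (a)`,
then `R` has Krull dimension at most one. -/
lemma ringKrullDim_le_one_of_colon {R : Type*} [CommRing R] [IsDomain R]
    [IsNoetherianRing R] [IsLocalRing R] [IsIntegrallyClosed R] {a e : R}
    (he : e ∉ Ideal.span {a}) (hm : ∀ u ∈ maximalIdeal R, u * e ∈ Ideal.span {a}) :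
    ringKrullDim R ≤ 1 := by
  classical
  have he0 : e ≠ 0 := by
    rintro rfl
    exact he (Ideal.zero_mem _)
  by_cases hbot : maximalIdeal R = ⊥
  · exact ringKrullDim_le_one_of_principal_maximalIdeal (u := 0)
      (by rw [hbot, Ideal.span_singleton_eq_bot.mpr rfl])
  have ha : a ≠ 0 := by
    rintro rfl
    apply hbot
    rw [eq_bot_iff]
    intro v hv
    have hve := hm v hv
    rw [Ideal.span_singleton_eq_bot.mpr rfl, Submodule.mem_bot] at hve
    rcases mul_eq_zero.mp hve with h | h
    · simpa using h
    · exact absurd h he0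
  by_cases hcase : ∀ u ∈ maximalIdeal R, ∃ d ∈ maximalIdeal R, u * e = a * d
  · exfalso
    set K := FractionRing R
    have hinj : Function.Injective (algebraMap R K) := IsFractionRing.injective R K
    have ha' : algebraMap R K a ≠ 0 := by
      simpa using fun h => ha (hinj (by simpa using h))
    set t : K := algebraMap R K e / algebraMap R K a with ht
    let N : Submodule R K := Submodule.map (Algebra.linearMap R K) (maximalIdeal R)
    have hsmul : ∀ n ∈ N, t • n ∈ N := by
      intro n hn
      obtain ⟨v, hv, rfl⟩ := Submodule.mem_map.mp hn
      obtain ⟨d, hd, hde⟩ := hcase v hv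
      have : t • (Algebra.linearMap R K) v = (Algebra.linearMap R K) d := by
        simp only [Algebra.linearMap_apply, smul_eq_mul, ht]
        rw [div_mul_eq_mul_div, eq_comm, eq_div_iff ha', ← map_mul, ← map_mul]
        rw [mul_comm e v, hde, mul_comm]
      rw [this]
      exact Submodule.mem_map_of_mem hd
    have hNbot : N ≠ ⊥ := by
      obtain ⟨v, hv, hv0⟩ := Submodule.exists_mem_ne_zero_of_ne_bot hbot
      intro h
      apply hv0
      have : (Algebra.linearMap R K) v ∈ N := Submodule.mem_map_of_mem hv
      rw [h, Submodule.mem_bot] at this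
      exact hinj (by simpa using this)
    have hNfg : N.FG := (IsNoetherian.noetherian (maximalIdeal R)).map _
    have hint : IsIntegral R t := isIntegral_of_smul_mem_submodule N hNbot hNfg t hsmul
    obtain ⟨w, hw⟩ := IsIntegrallyClosed.isIntegral_iff.mp hint
    apply he
    rw [Ideal.mem_span_singleton]
    refine ⟨w, hinj ?_⟩
    rw [map_mul, hw, ht]
    rw [mul_comm]; exact (div_mul_cancel₀ _ ha').symm
  · push_neg at hcase
    obtain ⟨u, hum, hu⟩ := hcase
    obtain ⟨d₀, hd₀⟩ := Ideal.mem_span_singleton.mp (hm u hum)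
    have hd₀u : IsUnit d₀ := by
      by_contra h
      exact hu d₀ h hd₀
    apply ringKrullDim_le_one_of_principal_maximalIdeal (u := u)
    refine le_antisymm ?_ (Ideal.span_le.mpr (Set.singleton_subset_iff.mpr hum))
    intro w hw
    obtain ⟨c, hc⟩ := Ideal.mem_span_singleton.mp (hm w hw)
    have key : w * d₀ = u * c := by
      have h2 : a * (w * d₀) = a * (u * c) := by
        calc a * (w * d₀) = (a * d₀) * w := by ring
        _ = (u * e) * w := by rw [hd₀]
        _ = (w * e) * u := by ring
        _ = (a * c) * u := by rw [hc]
        _ = a * (u * c) := by ring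
      exact mul_left_cancel₀ ha h2
    obtain ⟨v, hv⟩ := hd₀u.exists_right_inv
    refine Ideal.mem_span_singleton.mpr ⟨c * v, ?_⟩
    calc w = w * (d₀ * v) := by rw [hv, mul_one]
    _ = (w * d₀) * v := by ring
    _ = (u * c) * v := by rw [key]
    _ = u * (c * v) := by ring

/-- If an element `b` of the fraction field of a Noetherian domain `A` is not in `A`,
then there is a prime `P` of `A` such that `b ∉ A_P` and such that any integrally
closed localization of `A` at `P` has Krull dimension at most one. -/
lemma exists_prime_of_not_mem_range {A : Type*} [CommRing A] [IsDomain A] [IsNoetherianRing A]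
    {K : Type*} [Field K] [Algebra A K] [IsFractionRing A K] (b : K)
    (hb : ∀ a₀ : A, algebraMap A K a₀ ≠ b) :
    ∃ P : PrimeSpectrum A,
      (∀ s, s ∉ P.asIdeal → ∀ a₀ : A, algebraMap A K s * b ≠ algebraMap A K a₀) ∧
      ∀ (R : Type v) [CommRing R] [IsDomain R] [Algebra A R],
        IsLocalization.AtPrime R P.asIdeal → IsIntegrallyClosed R → ringKrullDim R ≤ 1 := by
  obtain ⟨⟨c, a⟩, hrep⟩ := IsLocalization.surj (nonZeroDivisors A) b
  dsimp only at hrep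
  have hinj : Function.Injective (algebraMap A K) := IsFractionRing.injective A K
  have ha0 : algebraMap A K a ≠ 0 :=
    IsFractionRing.to_map_ne_zero_of_mem_nonZeroDivisors a.2
  have hc : c ∉ Ideal.span {(a : A)} := by
    intro h
    obtain ⟨d, hd⟩ := Ideal.mem_span_singleton.mp h
    apply hb d
    apply mul_right_cancel₀ ha0
    rw [← map_mul, mul_comm (d : A) (a : A), ← hd, ← hrep, mul_comm]
  set M := A ⧸ Ideal.span {(a : A)} with hM
  have hc0 : (Ideal.Quotient.mk (Ideal.span {(a : A)}) c : M) ≠ 0 := by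
    simpa [Ideal.Quotient.eq_zero_iff_mem] using hc
  obtain ⟨P, hP, hle⟩ := exists_le_isAssociatedPrime_of_isNoetherianRing A _ hc0
  obtain ⟨hPp, e', hPe⟩ := isAssociatedPrime_iff.mp hP
  obtain ⟨e, rfl⟩ := Ideal.Quotient.mk_surjective e'
  have hsm : ∀ s x : A, s • (Ideal.Quotient.mk (Ideal.span {(a : A)}) x) =
      Ideal.Quotient.mk (Ideal.span {(a : A)}) (s * x) := fun s x => rfl
  have hPmem : ∀ s : A, s ∈ P ↔ s * e ∈ Ideal.span {(a : A)} := by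
    intro s
    rw [hPe, Submodule.mem_colon_singleton, hsm, Submodule.mem_bot, Ideal.Quotient.eq_zero_iff_mem]
  refine ⟨⟨P, hPp⟩, ?_, ?_⟩
  · intro s hs a₀ heq
    apply hs
    apply hle
    rw [Submodule.mem_colon_singleton, hsm, Submodule.mem_bot, Ideal.Quotient.eq_zero_iff_mem,
      Ideal.mem_span_singleton]
    refine ⟨a₀, hinj ?_⟩
    calc algebraMap A K (s * c) = algebraMap A K s * algebraMap A K c := map_mul _ _ _
    _ = algebraMap A K s * (b * algebraMap A K (a : A)) := by rw [hrep]
    _ = (algebraMap A K s * b) * algebraMap A K (a : A) := by ring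
    _ = algebraMap A K a₀ * algebraMap A K (a : A) := by rw [heq]
    _ = algebraMap A K ((a : A) * a₀) := by rw [← map_mul, mul_comm]
  · intro R _ _ _ hloc hic
    haveI := hloc
    haveI : IsLocalRing R := IsLocalization.AtPrime.isLocalRing R P
    haveI : IsNoetherianRing R :=
      IsLocalization.isNoetherianRing P.primeCompl R inferInstance
    haveI := hic
    have he' : e ∉ Ideal.span {(a : A)} := by
      intro h
      apply hPp.ne_top
      rw [Ideal.eq_top_iff_one, hPmem 1, one_mul]
      exact h
    set f := algebraMap A R with hf
    have hfinj : Function.Injective f :=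
      IsLocalization.injective R P.primeCompl_le_nonZeroDivisors
    apply ringKrullDim_le_one_of_colon (a := f a) (e := f e)
    · intro hmem
      obtain ⟨w, hw⟩ := Ideal.mem_span_singleton.mp hmem
      obtain ⟨⟨d, σ⟩, hwd⟩ := IsLocalization.surj P.primeCompl w
      have h2 : f (e * σ) = f (a * d) := by
        rw [map_mul, map_mul, hw, mul_assoc, hwd]
      have h3 : (σ : A) * e ∈ Ideal.span {(a : A)} := by
        rw [mul_comm]
        exact Ideal.mem_span_singleton.mpr ⟨d, hfinj h2⟩
      exact σ.2 ((hPmem σ).mpr h3)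
    · intro v hv
      obtain ⟨⟨s, σ⟩, hvs⟩ := IsLocalization.surj P.primeCompl v
      have hsP : s ∈ P := by
        have h1 : f s ∈ maximalIdeal R := by
          rw [← hvs]
          exact Ideal.mul_mem_right _ _ hv
        have h2 := IsLocalization.AtPrime.comap_maximalIdeal R P
        rw [← h2]
        exact h1
      obtain ⟨d, hd⟩ := Ideal.mem_span_singleton.mp ((hPmem s).mp hsP)
      have hσu : IsUnit (f σ) := IsLocalization.map_units R σ
      obtain ⟨σi, hσi⟩ := hσu.exists_right_inv
      refine Ideal.mem_span_singleton.mpr ⟨f d * σi, ?_⟩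
      calc v * f e = v * f e * (f σ * σi) := by rw [hσi, mul_one]
      _ = (v * f σ) * f e * σi := by ring
      _ = f s * f e * σi := by rw [hvs]
      _ = f (s * e) * σi := by rw [map_mul]
      _ = f (a * d) * σi := by rw [hd]
      _ = f a * (f d * σi) := by rw [map_mul]; ring

end AlgebraPreliminaries

/-- **Claim in Step 4 of Theorem 5.** Let `U` be an integral Noetherian normal scheme (all
local rings are integrally closed domains), and `U₀ ⊆ U` an open subscheme whose complement
consists of points with local ring of Krull dimension at least `2`.  If `g : J ⟶ U` is an
affine morphism with `J` integral, and `ι : U₀ ⟶ J` is an open immersion with dense image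
such that `ι ≫ g` is the inclusion `U₀ ⟶ U`, then `g` is an isomorphism. -/
theorem affine_birational_isomorphism_over_normal
    (U : Scheme) [IsIntegral U] [AlgebraicGeometry.IsNoetherian U]
    (hnormal : ∀ x : U, IsDomain (U.presheaf.stalk x) ∧
      IsIntegrallyClosed (U.presheaf.stalk x))
    (U₀ : U.Opens)
    (hcodim : ∀ x : U, x ∉ U₀ → 2 ≤ ringKrullDim (U.presheaf.stalk x))
    (J : Scheme) [IsIntegral J]
    (g : J ⟶ U) (hg : IsAffineHom g)
    (ι : (U₀ : Scheme) ⟶ J) (hι : IsOpenImmersion ι)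
    (hdense : Dense (Set.range ι.base))
    (hcomp : ι ≫ g = U₀.ι) :
    IsIso g := by
  haveI := hg
  haveI := hι
  -- `U₀` is nonempty
  haveI hU₀ne : Nonempty U₀ := by
    obtain ⟨_, x₀, rfl⟩ := hdense.nonempty
    have hmem : U₀.ι.base x₀ ∈ Set.range U₀.ι.base := Set.mem_range_self x₀
    rw [Scheme.Opens.range_ι] at hmem
    exact ⟨⟨U₀.ι.base x₀, hmem⟩⟩
  -- generic points
  have hιξ : ι.base (genericPoint (U₀ : Scheme)) = genericPoint J :=
    genericPoint_eq_of_isOpenImmersion ι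
  have hUιξ : U₀.ι.base (genericPoint (U₀ : Scheme)) = genericPoint U :=
    genericPoint_eq_of_isOpenImmersion U₀.ι
  have hgξ : g.base (genericPoint J) = genericPoint U := by
    rw [← hιξ, ← Scheme.Hom.comp_apply, hcomp, hUιξ]
  -- the stalk maps of `g` at points of the image of `ι` are isomorphisms
  have hstalkIso : ∀ x' : (U₀ : Scheme), IsIso (g.stalkMap (ι.base x')) := by
    intro x'
    have h1 := Scheme.Hom.stalkMap_comp ι g x'
    have h2 : IsIso ((ι ≫ g).stalkMap x') := by rw [hcomp]; infer_instance
    rw [h1] at h2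
    exact @IsIso.of_isIso_comp_right _ _ _ _ _ _ (ι.stalkMap x') inferInstance h2
  -- main step: `g.app V` is an isomorphism for every nonempty affine open `V ⊆ U`
  have main : ∀ V : U.Opens, IsAffineOpen V → (V : Set U).Nonempty → IsIso (g.app V) := by
    intro V hV hne
    haveI : Nonempty V := ⟨⟨hne.choose, hne.choose_spec⟩⟩
    haveI hNoeth : IsNoetherianRing Γ(U, V) :=
      IsLocallyNoetherian.component_noetherian ⟨V, hV⟩
    haveI hKfr := functionField_isFractionRing_of_isAffineOpen U V hV
    have hηV : genericPoint U ∈ V :=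
      ((genericPoint_spec U).mem_open_set_iff V.isOpen).mpr
        (by simpa using (inferInstance : Nonempty V))
    have hξV : genericPoint J ∈ g ⁻¹ᵁ V := show g.base _ ∈ V from hgξ ▸ hηV
    -- the isomorphism between the function fields
    let F : U.functionField ⟶ J.presheaf.stalk (genericPoint J) :=
      (U.presheaf.stalkCongr (Inseparable.of_eq hgξ.symm)).hom ≫ g.stalkMap (genericPoint J)
    haveI : IsIso (g.stalkMap (genericPoint J)) := by rw [← hιξ]; exact hstalkIso _
    haveI hFiso : IsIso F := by
      apply (config := { allowSynthFailures := true }) IsIso.comp_isIso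
    have hFbij : Function.Bijective F :=
      (ConcreteCategory.isIso_iff_bijective F).mp hFiso
    -- compatibility of `g.app V` with the function field embeddings
    have hcompat : ∀ aa : Γ(U, V), J.presheaf.germ (g ⁻¹ᵁ V) (genericPoint J) hξV
        ((g.app V) aa) = F (algebraMap Γ(U, V) U.functionField aa) := by
      intro aa
      have h1 : algebraMap Γ(U, V) U.functionField aa = U.presheaf.germ V (genericPoint U)
          hηV aa := rfl
      have h2 : (U.presheaf.stalkCongr (Inseparable.of_eq hgξ.symm)).hom
          (U.presheaf.germ V (genericPoint U) hηV aa)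
          = U.presheaf.germ V (g.base (genericPoint J)) hξV aa := by
        rw [TopCat.Presheaf.stalkCongr_hom]
        exact TopCat.Presheaf.germ_stalkSpecializes_apply _ _ _ _
      show _ = (g.stalkMap (genericPoint J)) (_)
      rw [h1]; erw [h2]; exact (Scheme.Hom.germ_stalkMap_apply g V (genericPoint J) hξV aa).symm
    rw [ConcreteCategory.isIso_iff_bijective]
    constructor
    · -- injectivity
      intro a₁ a₂ h
      have h'' : (g.app V) a₁ = (g.app V) a₂ := h
      have h3 := congrArg (J.presheaf.germ (g ⁻¹ᵁ V) (genericPoint J) hξV) h''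
      rw [hcompat, hcompat] at h3
      exact IsFractionRing.injective Γ(U, V) U.functionField (hFbij.1 h3)
    · -- surjectivity
      intro b
      by_contra hnb
      push_neg at hnb
      obtain ⟨bK, hbK⟩ := hFbij.2 (J.presheaf.germ (g ⁻¹ᵁ V) (genericPoint J) hξV b)
      have hbKnot : ∀ a₀ : Γ(U, V), algebraMap Γ(U, V) U.functionField a₀ ≠ bK := by
        intro a₀ ha₀
        apply hnb a₀
        show (g.app V) a₀ = b
        apply germ_injective_of_isIntegral J (genericPoint J) hξV
        rw [hcompat a₀, ha₀, hbK]
      obtain ⟨P, hsP, hR⟩ := exists_prime_of_not_mem_range bK hbKnot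
      -- realize `P` as a point `y ∈ V`
      have hy : ∃ y : V, hV.primeIdealOf y = P := by
        have hmem : hV.fromSpec.base P ∈ V := by
          have h0 : hV.fromSpec.base P ∈ Set.range hV.fromSpec.base := Set.mem_range_self P
          rwa [hV.range_fromSpec] at h0
        refine ⟨⟨hV.fromSpec.base P, hmem⟩, ?_⟩
        have hfinj : Function.Injective hV.fromSpec.base :=
          hV.fromSpec.isOpenEmbedding.injective
        apply hfinj
        rw [hV.fromSpec_primeIdealOf]
      obtain ⟨y, rfl⟩ := hy
      haveI hyloc := hV.isLocalization_stalk y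
      haveI hdom : IsDomain (U.presheaf.stalk (y : U)) := (hnormal _).1
      haveI hicl : IsIntegrallyClosed (U.presheaf.stalk (y : U)) := (hnormal _).2
      by_cases hyU₀ : (y : U) ∈ U₀
      · -- the point lies in `U₀`: contradiction with `b ∉ A_P`
        set x' : (U₀ : Scheme) := ⟨(y : U), hyU₀⟩ with hx'def
        set j := ι.base x' with hjdef
        have hgj : g.base j = (y : U) := by
          rw [hjdef, ← Scheme.Hom.comp_apply, hcomp]
          rfl
        have hjV : j ∈ g ⁻¹ᵁ V := show g.base j ∈ V from hgj ▸ y.2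
        let G : U.presheaf.stalk (y : U) ⟶ J.presheaf.stalk j :=
          (U.presheaf.stalkCongr (Inseparable.of_eq hgj.symm)).hom ≫ g.stalkMap j
        haveI : IsIso (g.stalkMap j) := hstalkIso x'
        haveI hGiso : IsIso G := by
          apply (config := { allowSynthFailures := true }) IsIso.comp_isIso
        have hGbij : Function.Bijective G :=
          (ConcreteCategory.isIso_iff_bijective G).mp hGiso
        obtain ⟨α, hα⟩ := hGbij.2 (J.presheaf.germ (g ⁻¹ᵁ V) j hjV b)
        obtain ⟨⟨aa, s⟩, hs⟩ :=
          IsLocalization.surj (hV.primeIdealOf y).asIdeal.primeCompl α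
        dsimp only at hs
        -- push `α` into the function field
        have hkey : algebraMap (U.presheaf.stalk (y : U)) U.functionField α = bK := by
          apply hFbij.1
          rw [hbK]
          -- both sides are obtained by specializing to the generic point
          have hξj : (genericPoint J) ⤳ j := (genericPoint_spec J).specializes trivial
          have e1 : J.presheaf.germ (g ⁻¹ᵁ V) (genericPoint J) hξV b
              = J.presheaf.stalkSpecializes hξj (J.presheaf.germ (g ⁻¹ᵁ V) j hjV b) := by
            rw [TopCat.Presheaf.germ_stalkSpecializes_apply]
          have hyspec : genericPoint U ⤳ (y : U) := (genericPoint_spec U).specializes trivial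
          rw [e1, ← hα]
          show (g.stalkMap (genericPoint J))
              ((U.presheaf.stalkSpecializes (Inseparable.of_eq hgξ.symm).specializes')
                ((U.presheaf.stalkSpecializes hyspec) α))
            = (J.presheaf.stalkSpecializes hξj)
              ((g.stalkMap j)
                ((U.presheaf.stalkSpecializes (Inseparable.of_eq hgj.symm).specializes') α))
          rw [← Scheme.Hom.stalkSpecializes_stalkMap_apply g (genericPoint J) j hξj]
          rw [TopCat.Presheaf.stalkSpecializes_comp_apply,
            TopCat.Presheaf.stalkSpecializes_comp_apply]
        -- now derive the contradiction
        apply hsP s s.2 aa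
        have := congrArg (algebraMap (U.presheaf.stalk (y : U)) U.functionField) hs
        rw [map_mul, hkey] at this
        rw [IsScalarTower.algebraMap_apply Γ(U, V) (U.presheaf.stalk (y : U)) U.functionField,
          IsScalarTower.algebraMap_apply Γ(U, V) (U.presheaf.stalk (y : U)) U.functionField aa,
          mul_comm]
        exact this
      · -- the point lies outside `U₀`: contradiction with the codimension bound
        have h2 := hcodim (y : U) hyU₀
        have h1 := hR (U.presheaf.stalk (y : U)) hyloc hicl
        have h21 : (2 : WithBot (WithTop ℕ)) ≤ 1 := le_trans h2 h1
        have : (2 : ℕ) ≤ 1 := by exact_mod_cast h21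
        omega
  -- assemble: being an isomorphism is local on the target
  have hiso : MorphismProperty.isomorphisms Scheme g := by
    apply IsZariskiLocalAtTarget.of_iSup_eq_top (P := MorphismProperty.isomorphisms Scheme)
      (fun x : U => (U.affineCover.f (U.affineCover.idx x)).opensRange)
    · rw [eq_top_iff]
      intro x _
      exact TopologicalSpace.Opens.mem_iSup.mpr ⟨x, U.affineCover.covers x⟩
    · intro x
      have hV : IsAffineOpen (U.affineCover.f (U.affineCover.idx x)).opensRange := isAffineOpen_opensRange _
      have hne : (((U.affineCover.f (U.affineCover.idx x)).opensRange : Set U)).Nonempty :=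
        ⟨x, U.affineCover.covers x⟩
      haveI : IsAffine ((U.affineCover.f (U.affineCover.idx x)).opensRange : U.Opens).toScheme := hV
      exact (isIso_morphismRestrict_iff_isIso_app g hV).mpr (main _ hV hne)
  exact hiso
end

section
/- Let p be a prime and let l be an algebraically closed field of characteristic p. Let E be the perfect closure of the formal power series ring l[[T]] (the colimit of l[[T]] along the Frobenius endomorphism, equivalently the union of the rings l[[T^{1/p^v}]] for v ≥ 0), and let ε : E → l be the ring homomorphism induced by the constant-coefficient homomorphism l[[T]] → l (which exists since l is perfect). Let r ≥ 1 and n ≥ 1 be natural numbers, let B be an r×r matrix with entries in E, and let z ∈ E^r satisfy z_i = Σ_{j=1}^{r} B_{ij} · (z_j)^{p^n} for all i. If z ≠ 0, then ε(z_i) ≠ 0 for some i. -/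
/-- A formal power series ring over a field of characteristic `p` has characteristic `p`. -/
instance powerSeries_charP (p : ℕ) (l : Type) [Field l] [CharP l p] :
    CharP (PowerSeries l) p :=
  charP_of_injective_ringHom (f := PowerSeries.C (R := l)) PowerSeries.C_injective p

/-- Any element of the perfect closure of `l[[T]]` whose image under `ε` is nonzero is a unit. -/
lemma isUnit_of_eps_ne_zero (p : ℕ) [Fact p.Prime] (l : Type) [Field l] [CharP l p]
    (ε : PerfectClosure (PowerSeries l) p →+* l)
    (hε : ε.comp (PerfectClosure.of (PowerSeries l) p) = PowerSeries.constantCoeff (R := l))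
    (x : PerfectClosure (PowerSeries l) p) (hx : ε x ≠ 0) : IsUnit x := by
  induction x using PerfectClosure.induction_on with
  | h x =>
    obtain ⟨m, f⟩ := x
    have hpow : (PerfectClosure.mk (PowerSeries l) p (m, f)) ^ p ^ m
        = PerfectClosure.of (PowerSeries l) p f := by
      rw [← PerfectClosure.iterate_frobenius_mk (PowerSeries l) p m f,
        iterate_frobenius]
    have hc : PowerSeries.constantCoeff (R := l) f ≠ 0 := by
      intro h0
      apply hx
      have : (ε (PerfectClosure.mk (PowerSeries l) p (m, f))) ^ p ^ m = 0 := by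
        rw [← map_pow, hpow, ← RingHom.comp_apply, hε, h0]
      exact pow_eq_zero_iff (pow_ne_zero m (Fact.out (p := p.Prime)).ne_zero) |>.mp this
    have hf : IsUnit f := PowerSeries.isUnit_iff_constantCoeff.mpr (hc.isUnit)
    have : IsUnit ((PerfectClosure.mk (PowerSeries l) p (m, f)) ^ p ^ m) := by
      rw [hpow]; exact hf.map _
    exact (isUnit_pow_iff (pow_ne_zero m (Fact.out (p := p.Prime)).ne_zero)).mp this

/-- **Subclaim 1 in Step 5 of Theorem 5.** Let `l` be an algebraically closed field of
characteristic `p`, let `E` be the perfect closure of `l[[T]]`, and let `ε : E → l` be the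
ring homomorphism induced by the constant-coefficient map `l[[T]] → l`.  If `z ∈ E^r` is a
nonzero solution of the Frobenius-semilinear fixed point equation
`z_i = Σ_j B_{ij} · z_j^(p^n)` (with `r, n ≥ 1`), then `ε (z_i) ≠ 0` for some `i`. -/
theorem nonzero_semilinear_fixed_point_nonzero_at_closed_point
    (p : ℕ) [Fact p.Prime] (l : Type) [Field l] [IsAlgClosed l] [CharP l p]
    (ε : PerfectClosure (PowerSeries l) p →+* l)
    (hε : ε.comp (PerfectClosure.of (PowerSeries l) p) = PowerSeries.constantCoeff (R := l))
    (r n : ℕ) (hr : 1 ≤ r) (hn : 1 ≤ n)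
    (B : Matrix (Fin r) (Fin r) (PerfectClosure (PowerSeries l) p))
    (z : Fin r → PerfectClosure (PowerSeries l) p)
    (hz : ∀ i, z i = ∑ j, B i j * z j ^ p ^ n)
    (hz0 : z ≠ 0) :
    ∃ i, ε (z i) ≠ 0 := by
  by_contra h
  push_neg at h
  apply hz0
  -- the ideal generated by the z i
  set I : Ideal (PerfectClosure (PowerSeries l) p) := Ideal.span (Set.range z) with hI
  set M : Ideal (PerfectClosure (PowerSeries l) p) := RingHom.ker ε with hM
  -- M is contained in the Jacobson radical of ⊥
  have hMjac : M ≤ Ideal.jacobson ⊥ := by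
    intro x hxM
    rw [Ideal.mem_jacobson_bot]
    intro y
    apply isUnit_of_eps_ne_zero p l ε hε
    have hx : ε x = 0 := hxM
    rw [map_add, map_mul, hx, zero_mul, zero_add, map_one]
    exact one_ne_zero
  -- I ≤ M • I
  have hle : I ≤ M • I := by
    rw [hI, Ideal.span_le]
    rintro _ ⟨i, rfl⟩
    rw [hz i]
    apply Submodule.sum_mem
    intro j _
    have hpn : p ^ n - 1 + 1 = p ^ n :=
      Nat.succ_pred_eq_of_pos (pow_pos (Fact.out (p := p.Prime)).pos n)
    have hsplit : B i j * z j ^ p ^ n = (B i j * z j ^ (p ^ n - 1)) * z j := by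
      rw [mul_assoc, ← pow_succ, hpn]
    rw [hsplit]
    refine Submodule.smul_mem_smul ?_ ?_
    · -- B i j * z j ^ (p ^ n - 1) ∈ M
      have hzj : ε (z j) = 0 := h j
      have hpos : p ^ n - 1 ≠ 0 := by
        have : 2 ≤ p := (Fact.out (p := p.Prime)).two_le
        have : 2 ≤ p ^ n := le_trans this (Nat.le_self_pow (by omega) p)
        omega
      show ε (B i j * z j ^ (p ^ n - 1)) = 0
      rw [map_mul, map_pow, hzj, zero_pow hpos, mul_zero]
    · exact Ideal.subset_span ⟨j, rfl⟩
  have hfg : I.FG := Submodule.fg_span (Set.finite_range z)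
  have hbot : I = ⊥ := Submodule.eq_bot_of_le_smul_of_le_jacobson_bot M I hfg hle hMjac
  funext i
  have : z i ∈ I := Ideal.subset_span ⟨i, rfl⟩
  rw [hbot] at this
  simpa using this
end
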